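/- Let T be a tree on n vertices with exactly b branching vertices, where 1 ≤ b ≤ n/2 − 1, and let f be a strictly convex real-valued function. Then H_f(T) ≥ b·f(3) + (n−2b−2)·f(2) + (b+2)·f(1), and equality holds if and only if the degree sequence of T consists of the value 3 with multiplicity b, the value 2 with multiplicity n−2b−2, and the value 1 with multiplicity b+2. -/
import Mathlib

open scoped Classical

/-- The vertex-degree function index `H_f(G) = Σ_{u ∈ V(G)} f(d(u))`. -/
noncomputable def Hf {V : Type*} [Fintype V] (G : SimpleGraph V) (f : ℝ → ℝ) : ℝ :=
  ∑ v, f (G.degree v)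

/-- The degree sequence of a graph, as a multiset of vertex degrees. -/
noncomputable def degSeq {V : Type*} [Fintype V] (G : SimpleGraph V) : Multiset ℕ :=
  Finset.univ.val.map (fun v => G.degree v)

lemma Dmono {f : ℝ → ℝ} (hf : StrictConvexOn ℝ Set.univ f) :
    StrictMono (fun k : ℕ => f (k + 1) - f k) := by
  apply strictMono_nat_of_lt_succ
  intro k
  have h := hf.slope_strict_mono_adjacent (x := (k : ℝ)) (y := (k : ℝ) + 1)
    (z := (k : ℝ) + 2) trivial trivial (by linarith) (by linarith)
  have h1 : ((k : ℝ) + 1 - k) = 1 := by ring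
  have h2 : ((k : ℝ) + 2 - (k + 1)) = 1 := by ring
  rw [h1, h2, div_one, div_one] at h
  push_cast
  have e : ((k : ℝ) + 1 + 1) = (k : ℝ) + 2 := by ring
  rw [e]
  linarith

lemma key_lt {f : ℝ → ℝ} (hf : StrictConvexOn ℝ Set.univ f) (m : ℕ) (hm : 4 ≤ m) :
    f 3 + ((m : ℝ) - 3) * (f 2 - f 1) < f m := by
  induction m, hm using Nat.le_induction with
  | base =>
    have h1 := Dmono hf (show (1:ℕ) < 3 by norm_num)
    simp only at h1
    push_cast at h1
    norm_num at h1 ⊢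
    linarith
  | succ m hm ih =>
    have h1 := Dmono hf (show (1:ℕ) < m by omega)
    simp only at h1
    push_cast at h1
    norm_num at h1
    push_cast
    linarith

lemma key_le {f : ℝ → ℝ} (hf : StrictConvexOn ℝ Set.univ f) (m : ℕ) (hm : 3 ≤ m) :
    f 3 + ((m : ℝ) - 3) * (f 2 - f 1) ≤ f m := by
  rcases eq_or_lt_of_le hm with h | h
  · rw [← h]; norm_num
  · exact (key_lt hf m (by omega)).le

theorem stmt12 {V : Type*} [Fintype V] (T : SimpleGraph V) (hT : T.IsTree)
    (n b : ℕ) (hn : n = Fintype.card V)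
    (hb : b = (Finset.univ.filter (fun v => 3 ≤ T.degree v)).card)
    (hb1 : 1 ≤ b) (hbn : (b : ℝ) ≤ (n : ℝ) / 2 - 1)
    (f : ℝ → ℝ) (hf : StrictConvexOn ℝ Set.univ f) :
    (b : ℝ) * f 3 + ((n : ℝ) - 2 * (b : ℝ) - 2) * f 2 + ((b : ℝ) + 2) * f 1 ≤ Hf T f ∧
    (Hf T f = (b : ℝ) * f 3 + ((n : ℝ) - 2 * (b : ℝ) - 2) * f 2 + ((b : ℝ) + 2) * f 1 ↔
      degSeq T = Multiset.replicate b 3 + Multiset.replicate (n - 2 * b - 2) 2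
        + Multiset.replicate (b + 2) 1) := by
  classical
  have hn2b : 2 * b + 2 ≤ n := by
    have : (2 * b + 2 : ℝ) ≤ (n : ℝ) := by linarith
    exact_mod_cast this
  have hn4 : 4 ≤ n := by omega
  have hbn' : b ≤ n := by omega
  -- every vertex has positive degree
  have hdegpos : ∀ v : V, 1 ≤ T.degree v := by
    intro v
    rw [show (1 : ℕ) = 0 + 1 from rfl, Nat.add_one_le_iff,
      SimpleGraph.degree_pos_iff_exists_adj]
    have hcard : 1 < Fintype.card V := by omega
    obtain ⟨w, hw⟩ := Fintype.exists_ne_of_one_lt_card hcard v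
    obtain ⟨p⟩ := hT.isConnected.preconnected v w
    cases p with
    | nil => exact absurd rfl hw.symm
    | cons h _ => exact ⟨_, h⟩
  -- degree sum formulas
  have hsum : ∑ v, T.degree v = 2 * (n - 1) := by
    rw [T.sum_degrees_eq_twice_card_edges, hn, ← hT.card_edgeFinset]
    omega
  have hsumR : ∑ v, (T.degree v : ℝ) = 2 * (n : ℝ) - 2 := by
    have h := congrArg (fun k : ℕ => (k : ℝ)) hsum
    push_cast [Nat.cast_sub (by omega : 1 ≤ n)] at h
    linarith [h]
  set Δ : ℝ := f 2 - f 1 with hΔ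
  set c : V → ℝ := fun v =>
    (T.degree v : ℝ) * Δ + (if 3 ≤ T.degree v then f 3 - 3 * Δ else f 1 - Δ) with hc
  -- pointwise inequality
  have hpt : ∀ v : V, c v ≤ f (T.degree v) := by
    intro v
    simp only [hc]
    by_cases h3 : 3 ≤ T.degree v
    · rw [if_pos h3]
      have := key_le hf (T.degree v) h3
      rw [hΔ]
      nlinarith [this]
    · rw [if_neg h3]
      have h1 := hdegpos v
      have h2 : T.degree v ≤ 2 := by omega
      interval_cases h : T.degree v
      · norm_num
      · norm_num; linarith
  -- strictness for degree ≥ 4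
  have hptlt : ∀ v : V, 4 ≤ T.degree v → c v < f (T.degree v) := by
    intro v h4
    simp only [hc, if_pos (by omega : 3 ≤ T.degree v)]
    have := key_lt hf (T.degree v) h4
    rw [hΔ]
    nlinarith [this]
  -- total of c equals the target
  have hBcard : (Finset.univ.filter (fun v => 3 ≤ T.degree v)).card = b := hb.symm
  have hsc : ∑ v, c v
      = (b : ℝ) * f 3 + ((n : ℝ) - 2 * (b : ℝ) - 2) * f 2 + ((b : ℝ) + 2) * f 1 := by
    have h1 : ∑ v, c v = (∑ v, (T.degree v : ℝ)) * Δ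
        + ∑ v, (if 3 ≤ T.degree v then f 3 - 3 * Δ else f 1 - Δ) := by
      rw [Finset.sum_mul, ← Finset.sum_add_distrib]
    have hcardnot : (Finset.univ.filter (fun v => ¬ 3 ≤ T.degree v)).card = n - b := by
      have := Finset.card_filter_add_card_filter_not
        (s := (Finset.univ : Finset V)) (p := fun v => 3 ≤ T.degree v)
      simp only [Finset.card_univ] at this
      omega
    have h2 : ∑ v, (if 3 ≤ T.degree v then f 3 - 3 * Δ else f 1 - Δ)
        = (b : ℝ) * (f 3 - 3 * Δ) + ((n : ℝ) - b) * (f 1 - Δ) := by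
      rw [Finset.sum_ite, Finset.sum_const, Finset.sum_const, hBcard, hcardnot,
        nsmul_eq_mul, nsmul_eq_mul, Nat.cast_sub hbn']
    rw [h1, hsumR, h2, hΔ]
    ring
  have hHf : Hf T f = ∑ v, f (T.degree v) := rfl
  have hle : ∑ v, c v ≤ Hf T f := by
    rw [hHf]; exact Finset.sum_le_sum (fun v _ => hpt v)
  refine ⟨by rw [← hsc]; exact hle, ?_⟩
  constructor
  · -- equality → degree sequence
    intro heq
    have hall : ∀ v ∈ (Finset.univ : Finset V), c v = f (T.degree v) := by
      rw [← Finset.sum_eq_sum_iff_of_le (fun v _ => hpt v)]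
      rw [← hHf, heq, hsc]
    have hd3 : ∀ v : V, T.degree v ≤ 3 := by
      intro v
      by_contra h
      exact absurd (hall v (Finset.mem_univ v)) (ne_of_lt (hptlt v (by omega)))
    -- counting
    set P1 := Finset.univ.filter (fun v => T.degree v = 1) with hP1
    set P2 := Finset.univ.filter (fun v => T.degree v = 2) with hP2
    set P3 := Finset.univ.filter (fun v => T.degree v = 3) with hP3
    have hP3b : P3.card = b := by
      rw [hb, hP3]
      congr 1
      apply Finset.filter_congr
      intro v _
      have := hd3 v
      omega
    have hd12 : Disjoint P1 P2 := by
      rw [Finset.disjoint_left]; intro a h1 h2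
      simp [hP1, hP2] at h1 h2; omega
    have hd123 : Disjoint (P1 ∪ P2) P3 := by
      rw [Finset.disjoint_left]; intro a h1 h2
      simp [hP1, hP2, hP3] at h1 h2; rcases h1 with h1 | h1 <;> omega
    have hun : P1 ∪ P2 ∪ P3 = Finset.univ := by
      ext v
      simp only [hP1, hP2, hP3, Finset.mem_union, Finset.mem_filter, Finset.mem_univ,
        true_and, iff_true]
      have := hdegpos v; have := hd3 v; omega
    have hcards : P1.card + P2.card + P3.card = n := by
      have := congrArg Finset.card hun
      rw [Finset.card_union_of_disjoint hd123, Finset.card_union_of_disjoint hd12,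
        Finset.card_univ, ← hn] at this
      exact this
    have hsums : P1.card + 2 * P2.card + 3 * P3.card = 2 * (n - 1) := by
      have hs1 : ∑ v ∈ P1, T.degree v = P1.card := by
        rw [Finset.sum_congr rfl (fun v hv => by simpa [hP1] using
          (Finset.mem_filter.mp hv).2), Finset.sum_const, smul_eq_mul, mul_one]
      have hs2 : ∑ v ∈ P2, T.degree v = 2 * P2.card := by
        rw [Finset.sum_congr rfl (fun v hv => by simpa [hP2] using
          (Finset.mem_filter.mp hv).2), Finset.sum_const, smul_eq_mul, mul_comm]
      have hs3 : ∑ v ∈ P3, T.degree v = 3 * P3.card := by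
        rw [Finset.sum_congr rfl (fun v hv => by simpa [hP3] using
          (Finset.mem_filter.mp hv).2), Finset.sum_const, smul_eq_mul, mul_comm]
      have := hsum
      rw [← hun, Finset.sum_union hd123, Finset.sum_union hd12, hs1, hs2, hs3] at this
      omega
    have hP1c : P1.card = b + 2 := by omega
    have hP2c : P2.card = n - 2 * b - 2 := by omega
    -- now identify the degree sequence
    ext j
    rw [degSeq, Multiset.count_map]
    simp only [Multiset.count_add, Multiset.count_replicate]
    have hfil : ∀ (q : V → Prop) [DecidablePred q],
        Multiset.card ((Finset.univ : Finset V).val.filter q) = (Finset.univ.filter q).card := by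
      intro q _
      rw [← Finset.filter_val]
      rfl
    match j with
    | 0 =>
      rw [hfil]
      rw [if_neg (by norm_num : ¬ ((3:ℕ) = 0)), if_neg (by norm_num : ¬ ((2:ℕ) = 0)),
        if_neg (by norm_num : ¬ ((1:ℕ) = 0))]
      rw [Finset.card_eq_zero, Finset.filter_eq_empty_iff]
      intro v _
      have := hdegpos v
      omega
    | 1 =>
      rw [hfil]
      have : (Finset.univ.filter (fun a => 1 = T.degree a)) = P1 := by
        rw [hP1]; apply Finset.filter_congr; intro v _; simp [eq_comm]
      rw [this, hP1c]
      norm_num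
    | 2 =>
      rw [hfil]
      have : (Finset.univ.filter (fun a => 2 = T.degree a)) = P2 := by
        rw [hP2]; apply Finset.filter_congr; intro v _; simp [eq_comm]
      rw [this, hP2c]
      norm_num
    | 3 =>
      rw [hfil]
      have : (Finset.univ.filter (fun a => 3 = T.degree a)) = P3 := by
        rw [hP3]; apply Finset.filter_congr; intro v _; simp [eq_comm]
      rw [this, hP3b]
      norm_num
    | (j + 4) =>
      rw [hfil]
      rw [if_neg (by omega : ¬ (3 = j + 4)), if_neg (by omega : ¬ (2 = j + 4)),
        if_neg (by omega : ¬ (1 = j + 4))]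
      rw [Finset.card_eq_zero, Finset.filter_eq_empty_iff]
      intro v _
      have := hd3 v
      omega
  · -- degree sequence → equality
    intro hds
    have hmap : Hf T f = ((degSeq T).map (fun k : ℕ => f k)).sum := by
      rw [hHf, degSeq, Multiset.map_map, Finset.sum]
      rfl
    rw [hmap, hds]
    simp only [Multiset.map_add, Multiset.map_replicate, Multiset.sum_add,
      Multiset.sum_replicate, nsmul_eq_mul]
    have hcast : ((n - 2 * b - 2 : ℕ) : ℝ) = (n : ℝ) - 2 * b - 2 := by
      have : (n - 2 * b - 2 : ℕ) = n - (2 * b + 2) := by omega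
      rw [this, Nat.cast_sub hn2b]
      push_cast
      ring
    rw [hcast]
    push_cast
    ring
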